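/- For every nondeterministic unitary OBDD N computing a Boolean function f : {0,1}^n → {0,1} with variable order π, and every k with 0 < k < n, the width of N is at least the size of any strong 1-fooling set S_k^π for f. -/

import Mathlib

open scoped BigOperators

/-- State of a nondeterministic unitary OBDD of width `d` after reading input `x`
in variable order `π`: at step `j` the unitary `U j b` is applied, where `b` is the
value of the tested variable `x_{π j}`. -/
noncomputable def nuRun {n d : ℕ} (U : Fin n → Bool → Matrix (Fin d) (Fin d) ℂ)
    (π : Equiv.Perm (Fin n)) (init : Fin d → ℂ) (x : Fin n → Bool) : Fin d → ℂ :=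
  (List.ofFn fun j : Fin n => U j (x (π j))).foldl (fun v M => M.mulVec v) init

/-- All transition matrices are unitary. -/
def IsUnitaryFamily {n d : ℕ} (U : Fin n → Bool → Matrix (Fin d) (Fin d) ℂ) : Prop :=
  ∀ j b, U j b ∈ Matrix.unitaryGroup (Fin d) ℂ

/-- The initial state is a unit vector. -/
def NormalizedInit {d : ℕ} (init : Fin d → ℂ) : Prop :=
  ∑ q, ‖init q‖ ^ 2 = 1

/-- Nondeterministic acceptance: the projection of the final state onto the
accepting subspace (spanned by the accepting basis states `acc`) is nonzero. -/
def nuAccepts {n d : ℕ} (U : Fin n → Bool → Matrix (Fin d) (Fin d) ℂ)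
    (π : Equiv.Perm (Fin n)) (init : Fin d → ℂ) (acc : Finset (Fin d))
    (x : Fin n → Bool) : Prop :=
  ∃ q ∈ acc, nuRun U π init x q ≠ 0

/-- The NUOBDD computes `f`: it accepts exactly the inputs in `f⁻¹(1)`. -/
def nuComputes {n d : ℕ} (U : Fin n → Bool → Matrix (Fin d) (Fin d) ℂ)
    (π : Equiv.Perm (Fin n)) (init : Fin d → ℂ) (acc : Finset (Fin d))
    (f : (Fin n → Bool) → Bool) : Prop :=
  ∀ x, nuAccepts U π init acc x ↔ f x = true

/-- Number of 1s in the input. -/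
def countOnes {n : ℕ} (x : Fin n → Bool) : ℕ :=
  (Finset.univ.filter fun i => x i = true).card

/-- Combine a partial assignment `σ` on the first `k` variables in order `π`
(variable `π j` gets value `σ j` for `j < k`) with an assignment `γ` on the
remaining `n - k` variables, producing a full input in `{0,1}^n`. -/
def combine {n : ℕ} (k : ℕ) (hk : k ≤ n) (π : Equiv.Perm (Fin n))
    (σ : Fin k → Bool) (γ : Fin (n - k) → Bool) : Fin n → Bool :=
  fun i =>
    if h : ((π.symm i : Fin n) : ℕ) < k then σ ⟨((π.symm i : Fin n) : ℕ), h⟩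
    else γ ⟨((π.symm i : Fin n) : ℕ) - k, by
      have h1 : ((π.symm i : Fin n) : ℕ) < n := (π.symm i).isLt
      omega⟩

/-- A strong 1-fooling set for `f` at level `k` under order `π`: every pair
`(σ, γ)` satisfies `f(σγ) = 1`, and for distinct pairs `(σ, γ)`, `(σ', γ')` we
have `f(σγ') = 0` and `f(σ'γ) = 0`. -/
def IsStrongFoolingSet {n : ℕ} (k : ℕ) (hk : k ≤ n)
    (f : (Fin n → Bool) → Bool) (π : Equiv.Perm (Fin n))
    (S : Finset ((Fin k → Bool) × (Fin (n - k) → Bool))) : Prop :=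
  (∀ p ∈ S, f (combine k hk π p.1 p.2) = true) ∧
  (∀ p ∈ S, ∀ q ∈ S, p ≠ q →
    f (combine k hk π p.1 q.2) = false ∧ f (combine k hk π q.1 p.2) = false)

/-- For every nondeterministic unitary OBDD `N` computing `f : {0,1}^n → {0,1}`
with variable order `π`, and every `k` with `0 < k < n`, the width of `N` is at
least the size of any strong 1-fooling set `S_k^π` for `f`. -/
lemma foldl_mulVec {d : ℕ} (L : List (Matrix (Fin d) (Fin d) ℂ)) (v : Fin d → ℂ) :
    L.foldl (fun v M => M.mulVec v) v = L.reverse.prod.mulVec v := by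
  induction L generalizing v with
  | nil => simp
  | cons M L ih =>
      simp [List.foldl_cons, ih, List.prod_append, Matrix.mulVec_mulVec]

theorem nuobdd_width_ge_foolingSet
    (n k d : ℕ) (hk1 : 0 < k) (hk2 : k < n)
    (f : (Fin n → Bool) → Bool)
    (U : Fin n → Bool → Matrix (Fin d) (Fin d) ℂ)
    (hU : IsUnitaryFamily U)
    (π : Equiv.Perm (Fin n)) (init : Fin d → ℂ) (hinit : NormalizedInit init)
    (acc : Finset (Fin d))
    (hcomp : nuComputes U π init acc f)
    (S : Finset ((Fin k → Bool) × (Fin (n - k) → Bool)))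
    (hS : IsStrongFoolingSet k (le_of_lt hk2) f π S) :
    S.card ≤ d := by
  classical
  obtain ⟨m, rfl⟩ : ∃ m, n = k + m := ⟨n - k, by omega⟩
  set hk : k ≤ k + m := le_of_lt hk2 with hhk
  set A : (Fin k → Bool) → Matrix (Fin d) (Fin d) ℂ := fun σ =>
    (List.ofFn fun j : Fin k => U (Fin.castAdd m j) (σ j)).reverse.prod with hA
  set B : (Fin (k + m - k) → Bool) → Matrix (Fin d) (Fin d) ℂ := fun γ =>
    (List.ofFn fun j : Fin m =>
      U (Fin.natAdd k j) (γ ⟨k + (j : ℕ) - k, by omega⟩)).reverse.prod with hB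
  have hrun : ∀ σ γ, nuRun U π init (combine k hk π σ γ) =
      (B γ).mulVec ((A σ).mulVec init) := by
    intro σ γ
    unfold nuRun
    rw [foldl_mulVec]
    have hsplit : (List.ofFn fun j : Fin (k + m) => U j (combine k hk π σ γ (π j))) =
        (List.ofFn fun j : Fin k => U (Fin.castAdd m j) (σ j)) ++
        (List.ofFn fun j : Fin m =>
          U (Fin.natAdd k j) (γ ⟨k + (j : ℕ) - k, by omega⟩)) := by
      rw [List.ofFn_add]
      congr 1
      · congr 1
        funext j
        congr 1
        simp only [combine, Equiv.symm_apply_apply]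
        rw [dif_pos (by exact j.isLt)]
        rfl
      · congr 1
        funext j
        congr 1
        simp only [combine, Equiv.symm_apply_apply]
        rw [dif_neg (by simp)]
        rfl
    rw [hsplit, List.reverse_append, List.prod_append, Matrix.mulVec_mulVec]
  have hli : LinearIndependent ℂ (fun p : {p // p ∈ S} => (A p.1.1).mulVec init) := by
    rw [Fintype.linearIndependent_iff]
    intro g hg p
    have hacc : nuAccepts U π init acc (combine k hk π p.1.1 p.1.2) :=
      (hcomp _).mpr (hS.1 p.1 p.2)
    obtain ⟨q0, hq0acc, hq0ne⟩ := hacc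
    have hzero : ∀ q : {q // q ∈ S}, q ≠ p →
        ((B p.1.2).mulVec ((A q.1.1).mulVec init)) q0 = 0 := by
      intro q hne
      have hpq : q.1 ≠ p.1 := fun h => hne (Subtype.ext h)
      have hf : f (combine k hk π q.1.1 p.1.2) = false := (hS.2 q.1 q.2 p.1 p.2 hpq).1
      have hnacc : ¬ nuAccepts U π init acc (combine k hk π q.1.1 p.1.2) := by
        rw [hcomp]; simp [hf]
      by_contra hc
      exact hnacc ⟨q0, hq0acc, by rw [hrun]; exact hc⟩
    have h2 := congrArg (fun v => ((B p.1.2).mulVec v) q0) hg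
    rw [show (B p.1.2).mulVec (∑ q : {q // q ∈ S}, g q • (A q.1.1).mulVec init)
        = ∑ q : {q // q ∈ S}, g q • (B p.1.2).mulVec ((A q.1.1).mulVec init) by
      simp_rw [← Matrix.mulVecLin_apply]
      rw [map_sum]
      simp] at h2
    rw [Finset.sum_apply] at h2
    rw [Finset.sum_eq_single p (fun q _ hq => by
        rw [Pi.smul_apply, hzero q hq, smul_zero]) (by simp)] at h2
    have hne0 : ((B p.1.2).mulVec ((A p.1.1).mulVec init)) q0 ≠ 0 := by
      rw [← hrun]; exact hq0ne
    rw [Matrix.mulVec_zero, Pi.zero_apply, Pi.smul_apply, smul_eq_mul] at h2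
    exact (mul_eq_zero.mp h2).resolve_right hne0
    
  have hcard := hli.fintype_card_le_finrank
  rwa [Fintype.card_coe, Module.finrank_fin_fun] at hcard
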